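/- (Proposition 1) Let a > b > 0, V > 0, k > 0, and let x, y : ℝ → ℝ be differentiable functions such that (x(t), y(t)) ≠ (0, 0) for all t ≥ 0 and such that ẋ(t) = V·cos(ψ_D(x(t), y(t))) and ẏ(t) = V·sin(ψ_D(x(t), y(t))) for all t ≥ 0. Then the agent asymptotically converges to the desired ellipse: x(t)²/a² + y(t)²/b² → 1 as t → ∞. -/

import Mathlib

open Real

/-- The counter-clockwise tangential heading at `(x, y)`:
`atan2 (b² x, −a² y)`, i.e. the argument of the complex number `−a² y + i b² x`. -/
noncomputable def psiT (a b x y : ℝ) : ℝ :=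
  Complex.arg ⟨-(a ^ 2) * y, b ^ 2 * x⟩

/-- The offset angle `ψ_O = arctan (k (γ − 1))` with `γ = x²/a² + y²/b²`. -/
noncomputable def psiO (a b k x y : ℝ) : ℝ :=
  Real.arctan (k * (x ^ 2 / a ^ 2 + y ^ 2 / b ^ 2 - 1))

/-- The desired heading `ψ_D = ψ_T + ψ_O`. -/
noncomputable def psiD (a b k x y : ℝ) : ℝ :=
  psiT a b x y + psiO a b k x y

lemma sin_arctan_mono {u v : ℝ} (h0 : 0 ≤ u) (huv : u ≤ v) :
    Real.sin (Real.arctan u) ≤ Real.sin (Real.arctan v) := by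
  rw [Real.sin_arctan, Real.sin_arctan]
  have hv0 : 0 ≤ v := h0.trans huv
  have hA : (0:ℝ) < Real.sqrt (1 + u ^ 2) := by positivity
  have hB : (0:ℝ) < Real.sqrt (1 + v ^ 2) := by positivity
  rw [div_le_div_iff₀ hA hB]
  have h1 : u * Real.sqrt (1 + v ^ 2) = Real.sqrt (u ^ 2 * (1 + v ^ 2)) := by
    rw [Real.sqrt_mul (sq_nonneg u), Real.sqrt_sq h0]
  have h2 : v * Real.sqrt (1 + u ^ 2) = Real.sqrt (v ^ 2 * (1 + u ^ 2)) := by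
    rw [Real.sqrt_mul (sq_nonneg v), Real.sqrt_sq hv0]
  rw [h1, h2]
  apply Real.sqrt_le_sqrt
  nlinarith [sq_nonneg u, sq_nonneg v]

lemma combo (a b k : ℝ) (hb : 0 < b) (hab : b < a) (p q : ℝ) (h : ¬(p = 0 ∧ q = 0)) :
    p * Real.cos (psiD a b k p q) / a ^ 2 + q * Real.sin (psiD a b k p q) / b ^ 2
      = -(Real.sin (psiO a b k p q)) *
        ((b ^ 2 * p ^ 2 / a ^ 2 + a ^ 2 * q ^ 2 / b ^ 2) / Real.sqrt (b ^ 4 * p ^ 2 + a ^ 4 * q ^ 2)) := by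
  have ha : 0 < a := hb.trans hab
  have hz : (⟨-(a ^ 2) * q, b ^ 2 * p⟩ : ℂ) ≠ 0 := by
    intro hc
    rw [Complex.ext_iff] at hc
    simp only [Complex.zero_re, Complex.zero_im] at hc
    apply h
    constructor
    · have := hc.2
      have hb2 : b ^ 2 ≠ 0 := by positivity
      exact (mul_eq_zero.1 this).resolve_left hb2
    · have := hc.1
      have ha2 : -(a ^ 2) ≠ 0 := neg_ne_zero.2 (by positivity)
      exact (mul_eq_zero.1 this).resolve_left ha2
  have hpos : 0 < b ^ 4 * p ^ 2 + a ^ 4 * q ^ 2 := by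
    rcases not_and_or.1 h with h | h <;> positivity
  have habs : ‖(⟨-(a ^ 2) * q, b ^ 2 * p⟩ : ℂ)‖ = Real.sqrt (b ^ 4 * p ^ 2 + a ^ 4 * q ^ 2) := by
    rw [Complex.norm_def, Complex.normSq_mk]
    ring_nf
  have hcos : Real.cos (psiT a b p q) = (-(a ^ 2) * q) / Real.sqrt (b ^ 4 * p ^ 2 + a ^ 4 * q ^ 2) := by
    rw [psiT, ← habs, Complex.cos_arg hz]
  have hsin : Real.sin (psiT a b p q) = (b ^ 2 * p) / Real.sqrt (b ^ 4 * p ^ 2 + a ^ 4 * q ^ 2) := by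
    rw [psiT, ← habs, Complex.sin_arg]
  obtain ⟨R, hRval, hR⟩ : ∃ R, Real.sqrt (b ^ 4 * p ^ 2 + a ^ 4 * q ^ 2) = R ∧ 0 < R :=
    ⟨_, rfl, Real.sqrt_pos.2 hpos⟩
  rw [psiD, Real.cos_add, Real.sin_add, hcos, hsin, hRval]
  field_simp
  ring

set_option maxHeartbeats 1000000 in
theorem agent_converges_to_ellipse
    (a b V k : ℝ) (hab : b < a) (hb : 0 < b) (hV : 0 < V) (hk : 0 < k)
    (x y : ℝ → ℝ) (hx : Differentiable ℝ x) (hy : Differentiable ℝ y)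
    (hne : ∀ t : ℝ, 0 ≤ t → (x t, y t) ≠ (0, 0))
    (hxd : ∀ t : ℝ, 0 ≤ t → deriv x t = V * Real.cos (psiD a b k (x t) (y t)))
    (hyd : ∀ t : ℝ, 0 ≤ t → deriv y t = V * Real.sin (psiD a b k (x t) (y t))) :
    Filter.Tendsto (fun t => x t ^ 2 / a ^ 2 + y t ^ 2 / b ^ 2)
      Filter.atTop (nhds 1) := by
  have ha : 0 < a := hb.trans hab
  have ha2 : (0:ℝ) < a ^ 2 := by positivity
  have hb2 : (0:ℝ) < b ^ 2 := by positivity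
  set g : ℝ → ℝ := fun t => x t ^ 2 / a ^ 2 + y t ^ 2 / b ^ 2 with hg
  -- basic facts
  have hne' : ∀ t : ℝ, 0 ≤ t → ¬(x t = 0 ∧ y t = 0) := by
    intro t ht hc
    exact hne t ht (by rw [hc.1, hc.2])
  have hgpos : ∀ t : ℝ, 0 ≤ t → 0 < g t := by
    intro t ht
    rcases not_and_or.1 (hne' t ht) with h | h
    · have : 0 < x t ^ 2 / a ^ 2 := by positivity
      have h2 : 0 ≤ y t ^ 2 / b ^ 2 := by positivity
      rw [hg]; dsimp only; linarith
    · have : 0 < y t ^ 2 / b ^ 2 := by positivity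
      have h2 : 0 ≤ x t ^ 2 / a ^ 2 := by positivity
      rw [hg]; dsimp only; linarith
  have hgdiff : Differentiable ℝ g := by
    rw [hg]
    exact ((hx.pow 2).div_const _).add ((hy.pow 2).div_const _)
  have hcontOn : ContinuousOn g (Set.Ici (0:ℝ)) := hgdiff.continuous.continuousOn
  have hdiffOn : DifferentiableOn ℝ g (interior (Set.Ici (0:ℝ))) := hgdiff.differentiableOn
  -- abbreviations as functions
  set S : ℝ → ℝ := fun t => Real.sin (Real.arctan (k * (g t - 1))) with hS
  set G : ℝ → ℝ := fun t =>
    (b ^ 2 * x t ^ 2 / a ^ 2 + a ^ 2 * y t ^ 2 / b ^ 2) /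
      Real.sqrt (b ^ 4 * x t ^ 2 + a ^ 4 * y t ^ 2) with hG
  have hSO : ∀ t : ℝ, Real.sin (psiO a b k (x t) (y t)) = S t := by
    intro t
    rw [hS, psiO, hg]
  -- the derivative formula
  have hderiv : ∀ t : ℝ, 0 ≤ t → deriv g t = -2 * V * (S t * G t) := by
    intro t ht
    have H : HasDerivAt g (2 * x t * deriv x t / a ^ 2 + 2 * y t * deriv y t / b ^ 2) t := by
      have H1 := (((hx t).hasDerivAt.pow 2).div_const (a ^ 2)).add
        (((hy t).hasDerivAt.pow 2).div_const (b ^ 2))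
      rw [hg]
      convert H1 using 1
      · rfl
      · rfl
      · rfl
      push_cast
      ring
    rw [H.deriv, hxd t ht, hyd t ht]
    have hc := combo a b k hb hab (x t) (y t) (hne' t ht)
    rw [hSO t] at hc
    rw [hG]
    linear_combination (2 * V) * hc
  -- positivity of G
  have hGpos : ∀ t : ℝ, 0 ≤ t → 0 < G t := by
    intro t ht
    have hQ : 0 < b ^ 2 * x t ^ 2 / a ^ 2 + a ^ 2 * y t ^ 2 / b ^ 2 := by
      rcases not_and_or.1 (hne' t ht) with h | h
      · have h1 : 0 < b ^ 2 * x t ^ 2 / a ^ 2 := by positivity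
        have h2 : 0 ≤ a ^ 2 * y t ^ 2 / b ^ 2 := by positivity
        linarith
      · have h1 : 0 < a ^ 2 * y t ^ 2 / b ^ 2 := by positivity
        have h2 : 0 ≤ b ^ 2 * x t ^ 2 / a ^ 2 := by positivity
        linarith
    have hR : 0 < Real.sqrt (b ^ 4 * x t ^ 2 + a ^ 4 * y t ^ 2) := by
      apply Real.sqrt_pos.2
      rcases not_and_or.1 (hne' t ht) with h | h <;> positivity
    rw [hG]
    exact div_pos hQ hR
  -- lower bound on G
  have hGlb : ∀ t : ℝ, 0 ≤ t → b / a ^ 2 * Real.sqrt (g t) ≤ G t := by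
    intro t ht
    have hγ : 0 < g t := hgpos t ht
    have hgt : g t = x t ^ 2 / a ^ 2 + y t ^ 2 / b ^ 2 := by rw [hg]
    have hQ : b ^ 2 * g t ≤ b ^ 2 * x t ^ 2 / a ^ 2 + a ^ 2 * y t ^ 2 / b ^ 2 := by
      rw [hgt]
      have h1 : b ^ 2 * (y t ^ 2 / b ^ 2) ≤ a ^ 2 * (y t ^ 2 / b ^ 2) := by
        apply mul_le_mul_of_nonneg_right (by nlinarith) (by positivity)
      have h2 : b ^ 2 * (x t ^ 2 / a ^ 2) = b ^ 2 * x t ^ 2 / a ^ 2 := by ring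
      have h3 : a ^ 2 * (y t ^ 2 / b ^ 2) = a ^ 2 * y t ^ 2 / b ^ 2 := by ring
      nlinarith [h1]
    have hRub : Real.sqrt (b ^ 4 * x t ^ 2 + a ^ 4 * y t ^ 2) ≤ a ^ 2 * b * Real.sqrt (g t) := by
      have key : b ^ 4 * x t ^ 2 + a ^ 4 * y t ^ 2 ≤ (a ^ 2 * b) ^ 2 * g t := by
        have h1 : (a ^ 2 * b) ^ 2 * g t = a ^ 2 * b ^ 2 * x t ^ 2 + a ^ 4 * y t ^ 2 := by
          rw [hgt]; field_simp
        have h2 : 0 ≤ (a ^ 2 - b ^ 2) * b ^ 2 * x t ^ 2 :=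
          mul_nonneg (mul_nonneg (by nlinarith) hb2.le) (sq_nonneg (x t))
        nlinarith [h1, h2]
      calc Real.sqrt (b ^ 4 * x t ^ 2 + a ^ 4 * y t ^ 2)
          ≤ Real.sqrt ((a ^ 2 * b) ^ 2 * g t) := Real.sqrt_le_sqrt key
        _ = a ^ 2 * b * Real.sqrt (g t) := by
            rw [Real.sqrt_mul (by positivity), Real.sqrt_sq (by positivity)]
    have hRpos : 0 < Real.sqrt (b ^ 4 * x t ^ 2 + a ^ 4 * y t ^ 2) := by
      apply Real.sqrt_pos.2
      rcases not_and_or.1 (hne' t ht) with h | h <;> positivity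
    rw [hG]
    dsimp only
    rw [le_div_iff₀ hRpos]
    have hsγ : 0 < Real.sqrt (g t) := Real.sqrt_pos.2 hγ
    calc b / a ^ 2 * Real.sqrt (g t) * Real.sqrt (b ^ 4 * x t ^ 2 + a ^ 4 * y t ^ 2)
        ≤ b / a ^ 2 * Real.sqrt (g t) * (a ^ 2 * b * Real.sqrt (g t)) := by
          apply mul_le_mul_of_nonneg_left hRub (by positivity)
      _ = b ^ 2 * (Real.sqrt (g t) * Real.sqrt (g t)) := by
          have hmm : ∀ s : ℝ, b / a ^ 2 * s * (a ^ 2 * b * s) = b ^ 2 * (s * s) := by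
            intro s; field_simp
          exact hmm _
      _ = b ^ 2 * g t := by rw [Real.mul_self_sqrt hγ.le]
      _ ≤ _ := hQ
  -- sign fact
  have hsign : ∀ t : ℝ, 0 ≤ t → 0 ≤ (g t - 1) * S t := by
    intro t ht
    rw [hS]
    dsimp only
    rw [Real.sin_arctan]
    have h1 : (g t - 1) * (k * (g t - 1) / Real.sqrt (1 + (k * (g t - 1)) ^ 2))
        = k * (g t - 1) ^ 2 / Real.sqrt (1 + (k * (g t - 1)) ^ 2) := by ring
    rw [h1]
    positivity
  -- W is antitone
  have hWanti : AntitoneOn (fun t => (g t - 1) ^ 2) (Set.Ici (0:ℝ)) := by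
    apply antitoneOn_of_deriv_nonpos (convex_Ici 0)
    · exact ((hgdiff.sub_const 1).pow 2).continuous.continuousOn
    · exact ((hgdiff.sub_const 1).pow 2).differentiableOn
    · intro t ht
      rw [interior_Ici] at ht
      have ht0 : (0:ℝ) ≤ t := le_of_lt ht
      have HW : HasDerivAt (fun t => (g t - 1) ^ 2) (2 * (g t - 1) * deriv g t) t := by
        have h0 : HasDerivAt (fun s => g s - 1) (deriv g t) t :=
          ((hgdiff t).hasDerivAt).sub_const 1
        have := h0.pow 2
        convert this using 1
        · rfl
        · rfl
        · rfl
        push_cast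
        ring
      rw [HW.deriv, hderiv t ht0]
      have h1 := hsign t ht0
      have h2 := (hGpos t ht0).le
      nlinarith [mul_nonneg (mul_nonneg h1 h2) hV.le]
  -- main argument
  rw [Metric.tendsto_atTop]
  intro ε hε
  have hex : ∃ t0, 0 ≤ t0 ∧ |g t0 - 1| < ε := by
    by_contra hcon
    push_neg at hcon
    have hσpos : 0 < Real.sin (Real.arctan (k * ε)) := by
      rw [Real.sin_arctan]; positivity
    set σ : ℝ := Real.sin (Real.arctan (k * ε)) with hσ
    by_cases hB : ∃ t1, 0 ≤ t1 ∧ g t1 - 1 ≤ -ε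
    · obtain ⟨t1, ht1, hgt1⟩ := hB
      have hall : ∀ t, 0 ≤ t → g t - 1 ≤ -ε := by
        intro t ht
        rcases le_abs.1 (hcon t ht) with h | h
        · exfalso
          have hc : ContinuousOn g (Set.uIcc t1 t) := hgdiff.continuous.continuousOn
          have h1 : (1:ℝ) ∈ Set.uIcc (g t1) (g t) := by
            rw [Set.mem_uIcc]
            left
            constructor <;> linarith
          obtain ⟨s, hs, hgs⟩ := intermediate_value_uIcc hc h1
          have hs0 : 0 ≤ s := by
            have hmin : t1 ⊓ t ≤ s := hs.1
            have : (0:ℝ) ≤ t1 ⊓ t := le_inf ht1 ht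
            linarith
          have := hcon s hs0
          rw [hgs] at this
          simp at this
          linarith
        · linarith
      have hg0 : 0 < g 0 := hgpos 0 le_rfl
      -- g is monotone on Ici 0
      have hmono : MonotoneOn g (Set.Ici (0:ℝ)) := by
        apply monotoneOn_of_deriv_nonneg (convex_Ici 0) hcontOn hdiffOn
        intro t ht
        rw [interior_Ici] at ht
        have ht0 : (0:ℝ) ≤ t := le_of_lt ht
        rw [hderiv t ht0]
        have hSneg : S t ≤ 0 := by
          rw [hS]
          dsimp only
          rw [Real.sin_arctan]
          apply div_nonpos_of_nonpos_of_nonneg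
          · nlinarith [hall t ht0]
          · positivity
        nlinarith [(hGpos t ht0).le, mul_nonneg (neg_nonneg.2 hSneg) (hGpos t ht0).le]
      have hge : ∀ t, 0 ≤ t → g 0 ≤ g t := fun t ht =>
        hmono Set.self_mem_Ici ht ht
      have hsg0 : 0 < Real.sqrt (g 0) := Real.sqrt_pos.2 hg0
      have hm0 : (0:ℝ) < b / a ^ 2 * Real.sqrt (g 0) := mul_pos (div_pos hb ha2) hsg0
      set c : ℝ := 2 * V * σ * (b / a ^ 2 * Real.sqrt (g 0)) with hc
      have hcpos : 0 < c := mul_pos (mul_pos (mul_pos two_pos hV) hσpos) hm0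
      have hdlb : ∀ t ∈ interior (Set.Ici (0:ℝ)), c ≤ deriv g t := by
        intro t ht
        rw [interior_Ici] at ht
        have ht0 : (0:ℝ) ≤ t := le_of_lt ht
        rw [hderiv t ht0]
        have hSub : σ ≤ -(S t) := by
          have heq : -(S t) = Real.sin (Real.arctan (k * (1 - g t))) := by
            rw [hS]
            dsimp only
            have : k * (1 - g t) = -(k * (g t - 1)) := by ring
            rw [this, Real.arctan_neg, Real.sin_neg]
          rw [heq, hσ]
          apply sin_arctan_mono (by positivity)
          have := hall t ht0
          nlinarith
        have hGlb2 : b / a ^ 2 * Real.sqrt (g 0) ≤ G t := by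
          calc b / a ^ 2 * Real.sqrt (g 0)
              ≤ b / a ^ 2 * Real.sqrt (g t) := by
                apply mul_le_mul_of_nonneg_left (Real.sqrt_le_sqrt (hge t ht0)) (by positivity)
            _ ≤ G t := hGlb t ht0
        have key : σ * (b / a ^ 2 * Real.sqrt (g 0)) ≤ (-(S t)) * G t :=
          mul_le_mul hSub hGlb2 hm0.le (le_trans hσpos.le hSub)
        have key2 : 2 * V * (σ * (b / a ^ 2 * Real.sqrt (g 0))) ≤ 2 * V * ((-(S t)) * G t) :=
          mul_le_mul_of_nonneg_left key (by positivity)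
        rw [hc]
        nlinarith [key2]
      have hgrow := (convex_Ici (0:ℝ)).mul_sub_le_image_sub_of_le_deriv hcontOn hdiffOn hdlb
        0 Set.self_mem_Ici (2 / c) (Set.mem_Ici.2 (div_pos two_pos hcpos).le)
        (div_pos two_pos hcpos).le
      have h3 := div_mul_cancel₀ (2:ℝ) (ne_of_gt hcpos)
      have h2c : c * (2 / c - 0) = 2 := by linear_combination h3
      rw [h2c] at hgrow
      have hT := hall (2 / c) (div_pos two_pos hcpos).le
      clear_value c
      have e1 : (2:ℝ) + g 0 ≤ g (2 / c) := by linarith [hgrow]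
      have e2 : g (2 / c) ≤ 1 - ε := by linarith [hT]
      have e3 : (2:ℝ) + g 0 ≤ 1 - ε := e1.trans e2
      linarith [e3, hg0, hε]
    · push_neg at hB
      have hall : ∀ t, 0 ≤ t → ε ≤ g t - 1 := by
        intro t ht
        rcases le_abs.1 (hcon t ht) with h | h
        · exact h
        · exfalso
          have := hB t ht
          linarith
      set c : ℝ := 2 * V * σ * (b / a ^ 2) with hc
      have hcpos : 0 < c :=
        mul_pos (mul_pos (mul_pos two_pos hV) hσpos) (div_pos hb ha2)
      have hdub : ∀ t ∈ interior (Set.Ici (0:ℝ)), deriv g t ≤ -c := by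
        intro t ht
        rw [interior_Ici] at ht
        have ht0 : (0:ℝ) ≤ t := le_of_lt ht
        rw [hderiv t ht0]
        have hSlb : σ ≤ S t := by
          rw [hS, hσ]
          dsimp only
          apply sin_arctan_mono (by positivity)
          have := hall t ht0
          nlinarith
        have hg1 : (1:ℝ) ≤ g t := by have := hall t ht0; linarith
        have hGlb2 : b / a ^ 2 ≤ G t := by
          calc b / a ^ 2 = b / a ^ 2 * 1 := by ring
            _ ≤ b / a ^ 2 * Real.sqrt (g t) := by
                apply mul_le_mul_of_nonneg_left _ (by positivity)
                rw [show (1:ℝ) = Real.sqrt 1 from (Real.sqrt_one).symm]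
                exact Real.sqrt_le_sqrt hg1
            _ ≤ G t := hGlb t ht0
        have hm : (0:ℝ) < b / a ^ 2 := by positivity
        have key : σ * (b / a ^ 2) ≤ S t * G t :=
          mul_le_mul hSlb hGlb2 hm.le (le_trans hσpos.le hSlb)
        have key2 : 2 * V * (σ * (b / a ^ 2)) ≤ 2 * V * (S t * G t) :=
          mul_le_mul_of_nonneg_left key (by positivity)
        rw [hc]
        nlinarith [key2]
      have hg0 : 0 < g 0 := hgpos 0 le_rfl
      have hgrow := (convex_Ici (0:ℝ)).image_sub_le_mul_sub_of_deriv_le hcontOn hdiffOn hdub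
        0 Set.self_mem_Ici (g 0 / c) (Set.mem_Ici.2 (div_pos hg0 hcpos).le)
        (div_pos hg0 hcpos).le
      have h3 := div_mul_cancel₀ (g 0) (ne_of_gt hcpos)
      have h2c : -c * (g 0 / c - 0) = -g 0 := by linear_combination -h3
      rw [h2c] at hgrow
      have hT := hall (g 0 / c) (div_pos hg0 hcpos).le
      clear_value c
      linarith
  obtain ⟨t0, ht0, hlt⟩ := hex
  refine ⟨t0, fun t ht => ?_⟩
  have ht0' : (0:ℝ) ≤ t := le_trans ht0 ht
  have hW := hWanti (Set.mem_Ici.2 ht0) (Set.mem_Ici.2 ht0') ht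
  have habs : |g t - 1| ≤ |g t0 - 1| := by
    have h1 : |g t - 1| = Real.sqrt ((g t - 1) ^ 2) := (Real.sqrt_sq_eq_abs _).symm
    have h2 : |g t0 - 1| = Real.sqrt ((g t0 - 1) ^ 2) := (Real.sqrt_sq_eq_abs _).symm
    rw [h1, h2]
    exact Real.sqrt_le_sqrt hW
  rw [Real.dist_eq]
  calc |g t - 1| ≤ |g t0 - 1| := habs
    _ < ε := hlt
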